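/- Let T1 and T2 be reduction operators relative to Y, let k ≥ 1 be an integer, and let w ∈ Y be such that T1(w) ≠ w and T2(w) ≠ w. Then lm(⟨id−T1, id−T2⟩^k(w)) = w; that is, ⟨id−T1, id−T2⟩^k(w) equals w plus a linear combination of elements of Y strictly smaller than w. -/

import Mathlib

/-- The alternating product `⟨t,s⟩^k` with `k` factors whose rightmost factor is `s`:
`⟨t,s⟩^{2i} = (ts)^i` and `⟨t,s⟩^{2i+1} = s(ts)^i`. -/
def altProd {A : Type*} [Monoid A] (t s : A) (k : ℕ) : A :=
  if Even k then (t * s) ^ (k / 2) else s * (t * s) ^ (k / 2)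

/-- A *reduction operator relative to `Y`* (a finite totally ordered set): a linear projector
`T` of `KY` such that for every `y ∈ Y`, either `T(y) = y` or `T(y) < y`, where `v < y` means
that `v = 0` or the leading (greatest) basis element of `v` is smaller than `y`; equivalently
every element of the support of `T(y)` is strictly smaller than `y`. -/
def IsReductionOperator {K Y : Type*} [Field K] [Fintype Y] [LinearOrder Y]
    (T : (Y →₀ K) →ₗ[K] (Y →₀ K)) : Prop :=
  T ∘ₗ T = T ∧
    ∀ y : Y, T (Finsupp.single y 1) = Finsupp.single y 1 ∨
      ∀ z ∈ (T (Finsupp.single y 1)).support, z < y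

lemma altProd_succ {A : Type*} [Monoid A] (t s : A) (k : ℕ) :
    altProd t s (k + 1) = (if Even k then s else t) * altProd t s k := by
  rcases Nat.even_or_odd k with hk | hk
  · obtain ⟨m, rfl⟩ := hk
    have hk' : Even (m + m) := ⟨m, rfl⟩
    have h1 : ¬ Even (m + m + 1) := by simp [Nat.even_add_one, hk']
    have h2 : (m + m + 1) / 2 = (m + m) / 2 := by omega
    simp [altProd, hk', h1, h2]
  · obtain ⟨m, rfl⟩ := hk
    have h1 : Even (2 * m + 1 + 1) := by refine ⟨m + 1, by ring⟩
    have h2 : ¬ Even (2 * m + 1) := by simp [Nat.even_add_one]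
    have h3 : (2 * m + 1 + 1) / 2 = m + 1 := by omega
    have h4 : (2 * m + 1) / 2 = m := by omega
    simp [altProd, h1, h2, h3, h4, pow_succ', mul_assoc]

lemma red_lt {K Y : Type*} [Field K] [Fintype Y] [LinearOrder Y]
    {T : (Y →₀ K) →ₗ[K] (Y →₀ K)} (h : IsReductionOperator T)
    {u : Y →₀ K} {w : Y} (hu : ∀ y ∈ u.support, y < w) :
    ∀ z ∈ (T u).support, z < w := by
  induction u using Finsupp.induction with
  | zero => simp
  | single_add y c f hy hc ih =>
    have hyw : y < w := by
      apply hu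
      simp only [Finsupp.mem_support_iff, Finsupp.add_apply, Finsupp.single_eq_same]
      have : f y = 0 := Finsupp.notMem_support_iff.mp hy
      simp [this, hc]
    have hfw : ∀ y' ∈ f.support, y' < w := by
      intro y' hy'
      apply hu
      have hne : y' ≠ y := fun h' => hy (h' ▸ hy')
      simp only [Finsupp.mem_support_iff, Finsupp.add_apply,
        Finsupp.single_eq_of_ne hne]
      simpa using Finsupp.mem_support_iff.mp hy'
    intro z hz
    rw [map_add] at hz
    rcases Finset.mem_union.mp (Finsupp.support_add hz) with hz | hz
    · have hsm : (Finsupp.single y c : Y →₀ K) = c • Finsupp.single y 1 := by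
        simp [Finsupp.smul_single]
      rw [hsm, map_smul] at hz
      have hz' : z ∈ (T (Finsupp.single y 1)).support := Finsupp.support_smul hz
      rcases h.2 y with he | hlt
      · rw [he] at hz'
        have := Finsupp.support_single_subset hz'
        simp only [Finset.mem_singleton] at this
        exact this ▸ hyw
      · exact lt_trans (hlt z hz') hyw
    · exact ih hfw z hz

/-- Let `T1`, `T2` be reduction operators relative to `Y`, let `k ≥ 1`, and
let `w ∈ Y` with `T1(w) ≠ w` and `T2(w) ≠ w`.  Then `⟨id−T1, id−T2⟩^k(w)` equals `w` plus a
linear combination of elements of `Y` strictly smaller than `w` (so its leading monomial is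
`w`). -/
theorem stmt2 {K Y : Type*} [Field K] [Fintype Y] [LinearOrder Y]
    (T1 T2 : (Y →₀ K) →ₗ[K] (Y →₀ K))
    (h1 : IsReductionOperator T1) (h2 : IsReductionOperator T2)
    (k : ℕ) (hk : 1 ≤ k) (w : Y)
    (hw1 : T1 (Finsupp.single w 1) ≠ Finsupp.single w 1)
    (hw2 : T2 (Finsupp.single w 1) ≠ Finsupp.single w 1) :
    ∀ z ∈ ((altProd (1 - T1) (1 - T2) k) (Finsupp.single w 1)
        - Finsupp.single w 1).support, z < w := by
  set e : Y →₀ K := Finsupp.single w 1 with he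
  have hT1e : ∀ z ∈ (T1 e).support, z < w := (h1.2 w).resolve_left hw1
  have hT2e : ∀ z ∈ (T2 e).support, z < w := (h2.2 w).resolve_left hw2
  -- key step
  have step : ∀ (T : (Y →₀ K) →ₗ[K] (Y →₀ K)), IsReductionOperator T →
      (∀ z ∈ (T e).support, z < w) →
      ∀ (v : Y →₀ K), (∀ z ∈ (v - e).support, z < w) →
      ∀ z ∈ ((1 - T) v - e).support, z < w := by
    intro T hT hTe v hv z hz
    have hdecomp : (1 - T) v - e = (v - e) - T (v - e) - T e := by
      have : T v = T (v - e) + T e := by rw [← map_add, sub_add_cancel]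
      simp only [LinearMap.sub_apply, Module.End.one_apply, this]
      abel
    rw [hdecomp] at hz
    have h3 := red_lt hT hv
    rcases Finset.mem_union.mp (Finsupp.support_sub hz) with hz' | hz'
    · rcases Finset.mem_union.mp (Finsupp.support_sub hz') with hz'' | hz''
      · exact hv z hz''
      · exact h3 z hz''
    · exact hTe z hz'
  induction k with
  | zero => omega
  | succ n ih =>
    rcases Nat.eq_or_lt_of_le hk with hn | hn
    · -- n = 0, k = 1
      have hn0 : n = 0 := by omega
      subst hn0
      have : altProd (1 - T1) (1 - T2) 1 = 1 - T2 := by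
        simp [altProd]
      rw [this]
      intro z hz
      apply hT2e
      have : (1 - T2) e - e = -(T2 e) := by
        simp only [LinearMap.sub_apply, Module.End.one_apply]; abel
      rw [this] at hz
      simpa using hz
    · have hn1 : 1 ≤ n := by omega
      have ihn := ih hn1
      rw [altProd_succ]
      rcases em (Even n) with hev | hev
      · simp only [hev, if_true, Module.End.mul_apply]
        exact step T2 h2 hT2e _ ihn
      · simp only [hev, if_false, Module.End.mul_apply]
        exact step T1 h1 hT1e _ ihn
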